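/- Let N ≥ 1 be an integer and f a real number with f ≥ 1/N. Then the simple Leslie matrix L_f of order N has a real eigenvalue λ ≥ 1 (i.e., λ, viewed as a complex number, is an eigenvalue of L_f regarded as a complex matrix) such that every complex eigenvalue μ of L_f with μ ≠ λ satisfies |μ| < λ. -/

import Mathlib

/-- The simple Leslie matrix of order `N` with constant fertility rate `f`:
first row all `f`, subdiagonal entries `1`, all other entries `0`. -/
def leslieSimple (N : ℕ) (f : ℝ) : Matrix (Fin N) (Fin N) ℝ :=
  fun i j => if i.val = 0 then f else if i.val = j.val + 1 then 1 else 0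

open Polynomial Matrix in
lemma my_eval_charpoly {n : Type*} [DecidableEq n] [Fintype n] (M : Matrix n n ℂ) (μ : ℂ) :
    M.charpoly.eval μ = (μ • (1 : Matrix n n ℂ) - M).det := by
  rw [Matrix.charpoly, ← Polynomial.coe_evalRingHom, RingHom.map_det]
  congr 1
  ext i j
  by_cases h : i = j <;>
    simp [charmatrix_apply, h, Matrix.one_apply, Matrix.smul_apply, Matrix.sub_apply]

lemma leslie_mulVec_zero (N : ℕ) (hN : 0 < N) (f : ℝ) (v : Fin N → ℂ) :
    ((leslieSimple N f).map (Complex.ofReal ·)).mulVec v ⟨0, hN⟩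
      = (f : ℂ) * ∑ j, v j := by
  simp [Matrix.mulVec, dotProduct, leslieSimple, Finset.mul_sum]

lemma leslie_mulVec_succ (N : ℕ) (f : ℝ) (m : ℕ) (h : m + 1 < N) (v : Fin N → ℂ) :
    ((leslieSimple N f).map (Complex.ofReal ·)).mulVec v ⟨m + 1, h⟩
      = v ⟨m, by omega⟩ := by
  simp only [Matrix.mulVec, dotProduct, Matrix.map_apply, leslieSimple]
  rw [Finset.sum_eq_single (⟨m, by omega⟩ : Fin N)]
  · simp
  · intro b _ hb
    have hbv : ¬ (m + 1 = b.val + 1) := by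
      intro hc
      have : b.val = m := by omega
      exact hb (Fin.ext (by simp [this]))
    simp [hbv]
    exact Or.inl (fun hc => hb (Fin.ext hc.symm))
  · simp

lemma leslie_root_iff (N : ℕ) (hN : 1 ≤ N) (f : ℝ) (μ : ℂ) :
    ((leslieSimple N f).map (Complex.ofReal ·)).charpoly.IsRoot μ ↔
      μ ^ N = (f : ℂ) * ∑ k ∈ Finset.range N, μ ^ k := by
  set A := (leslieSimple N f).map (Complex.ofReal ·) with hA
  have hNpos : 0 < N := hN
  have hlast : N - 1 < N := by omega
  rw [Polynomial.IsRoot, my_eval_charpoly]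
  rw [Matrix.exists_mulVec_eq_zero_iff.symm]
  have key : ∀ v : Fin N → ℂ, ((μ • (1 : Matrix (Fin N) (Fin N) ℂ) - A).mulVec v = 0
      ↔ A.mulVec v = μ • v) := by
    intro v
    rw [Matrix.sub_mulVec, sub_eq_zero, Matrix.smul_mulVec, Matrix.one_mulVec]
    exact eq_comm
  constructor
  · rintro ⟨v, hv0, hv⟩
    rw [key] at hv
    have step : ∀ m : ℕ, ∀ h : m + 1 < N, v ⟨m, by omega⟩ = μ * v ⟨m + 1, h⟩ := by
      intro m h
      have := congrFun hv ⟨m + 1, h⟩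
      rw [leslie_mulVec_succ N f m h v] at this
      simpa using this
    have hpow : ∀ m : ℕ, m < N → v ⟨N - 1 - m, by omega⟩ = μ ^ m * v ⟨N - 1, hlast⟩ := by
      intro m
      induction m with
      | zero => intro _; simp
      | succ m ih =>
        intro h
        have h1 : N - 1 - (m + 1) + 1 = N - 1 - m := by omega
        have h2 : N - 1 - (m + 1) + 1 < N := by omega
        have hs := step (N - 1 - (m + 1)) (by omega)
        rw [hs]
        have he : (⟨N - 1 - (m + 1) + 1, h2⟩ : Fin N) = ⟨N - 1 - m, by omega⟩ :=
          Fin.ext (by simp [h1])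
        rw [he, ih (by omega)]
        ring
    have hall : ∀ j : Fin N, v j = μ ^ (N - 1 - j.val) * v ⟨N - 1, hlast⟩ := by
      intro j
      have h1 : N - 1 - (N - 1 - j.val) = j.val := by omega
      have := hpow (N - 1 - j.val) (by omega)
      have he : (⟨N - 1 - (N - 1 - j.val), by omega⟩ : Fin N) = j := Fin.ext (by simp [h1])
      rwa [he] at this
    have hvl : v ⟨N - 1, hlast⟩ ≠ 0 := by
      intro hz
      apply hv0
      funext j
      rw [hall j, hz, mul_zero]; rfl
    have row0 := congrFun hv ⟨0, hNpos⟩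
    rw [leslie_mulVec_zero N hNpos f v] at row0
    simp only [Pi.smul_apply, smul_eq_mul] at row0
    have hsum : ∑ j, v j = (∑ k ∈ Finset.range N, μ ^ k) * v ⟨N - 1, hlast⟩ := by
      rw [Finset.sum_mul]
      calc ∑ j, v j = ∑ j : Fin N, μ ^ (N - 1 - j.val) * v ⟨N - 1, hlast⟩ :=
            Finset.sum_congr rfl (fun j _ => hall j)
        _ = ∑ k ∈ Finset.range N, μ ^ (N - 1 - k) * v ⟨N - 1, hlast⟩ :=
            Fin.sum_univ_eq_sum_range (fun k => μ ^ (N - 1 - k) * v ⟨N - 1, hlast⟩) N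
        _ = ∑ k ∈ Finset.range N, μ ^ k * v ⟨N - 1, hlast⟩ :=
            Finset.sum_range_reflect (fun k => μ ^ k * v ⟨N - 1, hlast⟩) N
    have hv0' : v ⟨0, hNpos⟩ = μ ^ (N - 1) * v ⟨N - 1, hlast⟩ := by
      simpa using hall ⟨0, hNpos⟩
    rw [hsum, hv0'] at row0
    have hpowN : μ * μ ^ (N - 1) = μ ^ N := by
      rw [← pow_succ']
      congr 1
      omega
    have h2 : μ ^ N * v ⟨N - 1, hlast⟩
        = ((f : ℂ) * ∑ k ∈ Finset.range N, μ ^ k) * v ⟨N - 1, hlast⟩ := by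
      rw [← hpowN]
      linear_combination row0.symm
    exact mul_right_cancel₀ hvl h2
  · intro heq
    refine ⟨fun j => μ ^ (N - 1 - j.val), ?_, ?_⟩
    · intro hz
      have := congrFun hz ⟨N - 1, hlast⟩
      simp at this
    · rw [key]
      funext i
      obtain ⟨iv, hlt⟩ := i
      simp only [Pi.smul_apply, smul_eq_mul]
      rcases iv with _ | m
      · rw [leslie_mulVec_zero N hNpos f]
        have hsum : ∑ j : Fin N, μ ^ (N - 1 - j.val) = ∑ k ∈ Finset.range N, μ ^ k := by
          calc ∑ j : Fin N, μ ^ (N - 1 - j.val)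
              = ∑ k ∈ Finset.range N, μ ^ (N - 1 - k) :=
                Fin.sum_univ_eq_sum_range (fun k => μ ^ (N - 1 - k)) N
            _ = ∑ k ∈ Finset.range N, μ ^ k :=
                Finset.sum_range_reflect (fun k => μ ^ k) N
        rw [hsum, ← heq]
        show μ ^ N = μ * μ ^ (N - 1 - 0)
        rw [← pow_succ']
        congr 1
        omega
      · rw [leslie_mulVec_succ N f m hlt]
        show μ ^ (N - 1 - m) = μ * μ ^ (N - 1 - (m + 1))
        rw [← pow_succ']
        congr 1
        omega


lemma exists_lam (N : ℕ) (hN : 1 ≤ N) (f : ℝ) (hf : 1 / (N : ℝ) ≤ f) :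
    ∃ lam : ℝ, 1 ≤ lam ∧ lam ^ N = f * ∑ k ∈ Finset.range N, lam ^ k ∧
      ∀ t : ℝ, 0 ≤ t → t ^ N ≤ f * ∑ k ∈ Finset.range N, t ^ k → t ≤ lam := by
  have hNpos : (0 : ℝ) < N := by exact_mod_cast hN
  have hfN : 1 ≤ f * N := by
    rw [div_le_iff₀ hNpos] at hf
    linarith
  have hfpos : 0 < f := by
    nlinarith
  set p : ℝ → ℝ := fun x => x ^ N - f * ∑ k ∈ Finset.range N, x ^ k with hp
  have hcont : Continuous p := by
    apply (continuous_pow N).sub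
    exact continuous_const.mul (continuous_finset_sum _ fun k _ => continuous_pow k)
  have hp1 : p 1 ≤ 0 := by
    simp only [hp, one_pow, Finset.sum_const, Finset.card_range, nsmul_eq_mul, mul_one]
    linarith
  set b : ℝ := f * N + 1 with hb
  have hb1 : 1 ≤ b := by nlinarith
  have hpb : 0 < p b := by
    have hsum : ∑ k ∈ Finset.range N, b ^ k ≤ N * b ^ (N - 1) := by
      calc ∑ k ∈ Finset.range N, b ^ k ≤ ∑ _k ∈ Finset.range N, b ^ (N - 1) := by
            apply Finset.sum_le_sum
            intro k hk
            exact pow_le_pow_right₀ hb1 (by have := Finset.mem_range.mp hk; omega)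
        _ = N * b ^ (N - 1) := by simp [Finset.sum_const, nsmul_eq_mul]
    have hbpow : 0 < b ^ (N - 1) := pow_pos (by linarith) _
    have hbN : b ^ N = b * b ^ (N - 1) := by
      rw [← pow_succ']
      congr 1
      omega
    have : f * ∑ k ∈ Finset.range N, b ^ k ≤ f * N * b ^ (N - 1) := by
      rw [mul_assoc]
      exact mul_le_mul_of_nonneg_left hsum (le_of_lt hfpos)
    have hlt : f * N * b ^ (N - 1) < b * b ^ (N - 1) := by
      apply mul_lt_mul_of_pos_right _ hbpow
      simp [hb]
    simp only [hp, hbN]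
    linarith
  obtain ⟨lam, hlam_mem, hplam⟩ :=
    intermediate_value_Icc hb1 hcont.continuousOn ⟨hp1, le_of_lt hpb⟩
  refine ⟨lam, hlam_mem.1, by simp only [hp] at hplam; linarith [hplam], ?_⟩
  intro t ht htle
  by_contra hlt
  push_neg at hlt
  have hlam1 : 1 ≤ lam := hlam_mem.1
  have hlampos : 0 < lam := by linarith
  have htpos : 0 < t := by linarith
  have hroot : lam ^ N = f * ∑ k ∈ Finset.range N, lam ^ k := by
    simp only [hp] at hplam; linarith
  have key : lam ^ (N - 1) * t ^ N ≤ t ^ (N - 1) * lam ^ N := by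
    calc lam ^ (N - 1) * t ^ N ≤ lam ^ (N - 1) * (f * ∑ k ∈ Finset.range N, t ^ k) :=
          mul_le_mul_of_nonneg_left htle (le_of_lt (pow_pos hlampos _))
      _ = ∑ k ∈ Finset.range N, f * (lam ^ (N - 1) * t ^ k) := by
          simp only [Finset.mul_sum]
          exact Finset.sum_congr rfl fun k _ => by ring
      _ ≤ ∑ k ∈ Finset.range N, f * (t ^ (N - 1) * lam ^ k) := by
          apply Finset.sum_le_sum
          intro k hk
          have hkN : k ≤ N - 1 := by have := Finset.mem_range.mp hk; omega
          apply mul_le_mul_of_nonneg_left _ (le_of_lt hfpos)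
          have h1 : lam ^ (N - 1) = lam ^ (N - 1 - k) * lam ^ k := by
            rw [← pow_add]
            congr 1
            omega
          have h2 : t ^ (N - 1) = t ^ (N - 1 - k) * t ^ k := by
            rw [← pow_add]
            congr 1
            omega
          rw [h1, h2]
          have h3 : lam ^ (N - 1 - k) ≤ t ^ (N - 1 - k) :=
            pow_le_pow_left₀ (le_of_lt hlampos) (le_of_lt hlt) _
          have h5 := mul_le_mul_of_nonneg_right h3
            (mul_nonneg (pow_nonneg (le_of_lt hlampos) k) (pow_nonneg ht k))
          nlinarith [h5]
      _ = t ^ (N - 1) * (f * ∑ k ∈ Finset.range N, lam ^ k) := by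
          simp only [Finset.mul_sum]
          exact Finset.sum_congr rfl fun k _ => by ring
      _ = t ^ (N - 1) * lam ^ N := by rw [hroot]
  have htN : t ^ N = t ^ (N - 1) * t := by rw [← pow_succ]; congr 1; omega
  have hlamN : lam ^ N = lam ^ (N - 1) * lam := by rw [← pow_succ]; congr 1; omega
  rw [htN, hlamN] at key
  have hprod : 0 < lam ^ (N - 1) * t ^ (N - 1) :=
    mul_pos (pow_pos hlampos _) (pow_pos htpos _)
  nlinarith [key]

/-- If `N ≥ 1` and `f ≥ 1/N`, the simple Leslie matrix `L_f` (regarded as a complex matrix)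
has a real eigenvalue `λ ≥ 1` which strictly dominates in modulus every other complex
eigenvalue.  (Complex eigenvalues are the roots of the characteristic polynomial.) -/

theorem leslie_dominant_eigenvalue (N : ℕ) (hN : 1 ≤ N) (f : ℝ) (hf : 1 / (N : ℝ) ≤ f) :
    ∃ lam : ℝ, 1 ≤ lam ∧
      ((leslieSimple N f).map (Complex.ofReal ·)).charpoly.IsRoot (lam : ℂ) ∧
      ∀ μ : ℂ, ((leslieSimple N f).map (Complex.ofReal ·)).charpoly.IsRoot μ →
        μ ≠ (lam : ℂ) → ‖μ‖ < lam := by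
  obtain ⟨lam, hlam1, hroot, hmax⟩ := exists_lam N hN f hf
  have hNpos : (0 : ℝ) < N := by exact_mod_cast hN
  have hfpos : 0 < f := lt_of_lt_of_le (by positivity) hf
  refine ⟨lam, hlam1, ?_, ?_⟩
  · rw [leslie_root_iff N hN]
    exact_mod_cast congrArg (Complex.ofReal) hroot
  · intro μ hμ hne
    rw [leslie_root_iff N hN] at hμ
    set t := ‖μ‖ with ht
    have htnonneg : 0 ≤ t := norm_nonneg μ
    have hsumabs : ‖∑ k ∈ Finset.range N, μ ^ k‖
        ≤ ∑ k ∈ Finset.range N, t ^ k := by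
      calc ‖∑ k ∈ Finset.range N, μ ^ k‖
          ≤ ∑ k ∈ Finset.range N, ‖μ ^ k‖ :=
            norm_sum_le _ _
        _ = ∑ k ∈ Finset.range N, t ^ k := by
            exact Finset.sum_congr rfl fun k _ => norm_pow _ _
    have habsf : ‖(f : ℂ)‖ = f := by
      rw [Complex.norm_real, Real.norm_eq_abs]
      exact abs_of_pos hfpos
    have habs : t ^ N ≤ f * ∑ k ∈ Finset.range N, t ^ k := by
      have h1 : t ^ N = ‖μ ^ N‖ := (norm_pow _ _).symm
      rw [h1, hμ, norm_mul, habsf]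
      exact mul_le_mul_of_nonneg_left hsumabs hfpos.le
    have hle : t ≤ lam := hmax t htnonneg habs
    rcases lt_or_eq_of_le hle with h | h
    · exact h
    · exfalso
      rcases eq_or_lt_of_le hN with hN1 | hN2
      · -- N = 1
        rw [← hN1] at hμ hroot
        simp [Finset.range_one] at hμ hroot
        apply hne
        rw [hμ, hroot]
      · -- 2 ≤ N
        have h2N : 2 ≤ N := hN2
        have hμ0 : μ ≠ 0 := by
          intro h0
          have ht0 : t = 0 := by rw [ht, h0, norm_zero]
          rw [ht0] at h
          linarith
        have hray : ¬ SameRay ℝ (1 : ℂ) μ := by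
          rw [Complex.sameRay_iff]
          push_neg
          refine ⟨one_ne_zero, hμ0, ?_⟩
          rw [Complex.arg_one]
          intro harg
          obtain ⟨hre, him⟩ := Complex.arg_eq_zero_iff.mp harg.symm
          apply hne
          have hμre : μ = (μ.re : ℂ) := Complex.ext rfl him
          have : t = μ.re := by
            rw [ht]
            conv_lhs => rw [hμre]
            rw [Complex.norm_real, Real.norm_eq_abs, abs_of_nonneg hre]
          rw [hμre, ← this, h]
        have hlt2 : ‖1 + μ‖ < 1 + t :=
          by simpa using norm_add_lt_of_not_sameRay hray
        have hsplit : ∀ z : ℂ, ∑ k ∈ Finset.range N, z ^ k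
            = (1 + z) + ∑ k ∈ Finset.Ico 2 N, z ^ k := by
          intro z
          rw [← Finset.sum_range_add_sum_Ico _ h2N]
          congr 1
          simp [Finset.sum_range_succ]
        have hIco : ‖∑ k ∈ Finset.Ico 2 N, μ ^ k‖
            ≤ ∑ k ∈ Finset.Ico 2 N, t ^ k := by
          calc ‖∑ k ∈ Finset.Ico 2 N, μ ^ k‖
              ≤ ∑ k ∈ Finset.Ico 2 N, ‖μ ^ k‖ := norm_sum_le _ _
            _ = ∑ k ∈ Finset.Ico 2 N, t ^ k :=
                Finset.sum_congr rfl fun k _ => norm_pow _ _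
        have hchain : ‖∑ k ∈ Finset.range N, μ ^ k‖
            < ∑ k ∈ Finset.range N, t ^ k := by
          rw [hsplit μ]
          calc ‖(1 + μ) + ∑ k ∈ Finset.Ico 2 N, μ ^ k‖
              ≤ ‖1 + μ‖ + ‖∑ k ∈ Finset.Ico 2 N, μ ^ k‖ :=
                norm_add_le _ _
            _ < (1 + t) + ∑ k ∈ Finset.Ico 2 N, t ^ k := by
                have := add_lt_add_of_lt_of_le hlt2 hIco
                linarith
            _ = ∑ k ∈ Finset.range N, t ^ k := by
                rw [← Finset.sum_range_add_sum_Ico (fun k => t ^ k) h2N]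
                congr 1
                simp [Finset.sum_range_succ]
        have hfinal : t ^ N < f * ∑ k ∈ Finset.range N, t ^ k := by
          have h1 : t ^ N = ‖μ ^ N‖ := (norm_pow _ _).symm
          rw [h1, hμ, norm_mul, habsf]
          exact mul_lt_mul_of_pos_left hchain hfpos
        rw [h] at hfinal
        rw [hroot] at hfinal
        exact lt_irrefl _ hfinal
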